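/- If a random variable Z takes values in the interval [a, b], then Var[Z] ≤ (b - E[Z])(E[Z] - a) (Bhatia–Davis inequality). -/

import Mathlib

open MeasureTheory ProbabilityTheory

/-- Bhatia–Davis inequality: if `a ≤ Z ≤ b` almost surely on a probability space,
then `Var[Z] ≤ (b - E[Z]) * (E[Z] - a)`. -/
theorem bhatia_davis {Ω : Type*} [MeasurableSpace Ω] (μ : Measure Ω)
    [IsProbabilityMeasure μ] (Z : Ω → ℝ) (hZ : AEMeasurable Z μ)
    (a b : ℝ) (hab : ∀ᵐ ω ∂μ, a ≤ Z ω ∧ Z ω ≤ b) :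
    variance Z μ ≤ (b - ∫ ω, Z ω ∂μ) * ((∫ ω, Z ω ∂μ) - a) := by
  have hmem : MemLp Z 2 μ := by
    apply MemLp.of_bound hZ.aestronglyMeasurable (max |a| |b|)
    filter_upwards [hab] with ω ⟨h1, h2⟩
    rw [Real.norm_eq_abs, abs_le]
    constructor
    · have : -|a| ≤ a := neg_abs_le a
      exact le_trans (by simpa using neg_le_neg (le_max_left |a| |b|)) (le_trans this h1)
    · exact le_trans h2 (le_trans (le_abs_self b) (le_max_right |a| |b|))
  have hsq : Integrable (fun ω => Z ω ^ 2) μ := hmem.integrable_sq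
  have hint : Integrable Z μ := hmem.integrable one_le_two
  have hvar : variance Z μ = (∫ ω, Z ω ^ 2 ∂μ) - (∫ ω, Z ω ∂μ) ^ 2 := by
    simpa using variance_eq_sub hmem
  have hnn : 0 ≤ ∫ ω, (b - Z ω) * (Z ω - a) ∂μ := by
    apply integral_nonneg_of_ae
    filter_upwards [hab] with ω ⟨h1, h2⟩
    exact mul_nonneg (by linarith) (by linarith)
  have hexp : ∫ ω, (b - Z ω) * (Z ω - a) ∂μ
      = (a + b) * (∫ ω, Z ω ∂μ) - (∫ ω, Z ω ^ 2 ∂μ) - a * b := by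
    have : ∀ ω, (b - Z ω) * (Z ω - a)
        = (a + b) * Z ω - Z ω ^ 2 - a * b := by intro ω; ring
    simp_rw [this]
    have h1 : Integrable (fun ω => (a + b) * Z ω - Z ω ^ 2) μ :=
      (hint.const_mul _).sub hsq
    rw [integral_sub h1 (integrable_const _),
      integral_sub (hint.const_mul _) hsq, integral_const_mul, integral_const]
    simp
  rw [hvar]
  nlinarith [hnn, hexp]
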